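/- Let l ≥ 2 and n ≥ 2 be integers. (i) The polynomial V_n = −n(n−1)·z^{l−2} together with S_n = z^n satisfies z^l·S_n″ + V_n·S_n = 0. (ii) Conversely, if V ∈ ℂ[z] with deg V ≤ l − 2 and a nonzero polynomial S ∈ ℂ[z] of degree exactly n satisfy z^l·S″ + V·S = 0, then V = −n(n−1)·z^{l−2} and S = c·z^n for some nonzero c ∈ ℂ. -/

import Mathlib

open Polynomial

theorem stmt_19 (l n : ℕ) (hl : 2 ≤ l) (hn : 2 ≤ n) :
    ((X : Polynomial ℂ) ^ l *
        (Polynomial.derivative (Polynomial.derivative ((X : Polynomial ℂ) ^ n))) +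
      (-(C ((n : ℂ) * ((n : ℂ) - 1))) * X ^ (l - 2)) * (X : Polynomial ℂ) ^ n = 0) ∧
    ∀ V S : Polynomial ℂ, V.degree ≤ ((l - 2 : ℕ) : WithBot ℕ) → S ≠ 0 →
      S.natDegree = n →
      (X : Polynomial ℂ) ^ l * (Polynomial.derivative (Polynomial.derivative S)) +
        V * S = 0 →
      V = -(C ((n : ℂ) * ((n : ℂ) - 1))) * X ^ (l - 2) ∧
      ∃ c : ℂ, c ≠ 0 ∧ S = C c * X ^ n := by
  obtain ⟨j, rfl⟩ : ∃ j, l = j + 2 := ⟨l - 2, by omega⟩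
  obtain ⟨k, rfl⟩ : ∃ k, n = k + 2 := ⟨n - 2, by omega⟩
  simp only [Nat.add_sub_cancel]
  have hk2 : ((k : ℂ) + 2) ≠ 0 := by
    have h := Nat.cast_ne_zero (R := ℂ) (n := k + 2) |>.mpr (by omega)
    push_cast at h; exact h
  have hk1 : ((k : ℂ) + 1) ≠ 0 := by
    have h := Nat.cast_ne_zero (R := ℂ) (n := k + 1) |>.mpr (by omega)
    push_cast at h; exact h
  constructor
  · rw [derivative_X_pow, derivative_C_mul, derivative_X_pow,
      show k + 2 - 1 = k + 1 from rfl, show k + 1 - 1 = k from rfl]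
    push_cast
    ring_nf
    simp only [mul_assoc, ← C_mul]
    ring_nf
  · rintro V S hVdeg hS0 hSdeg heq
    have hVnat : V.natDegree ≤ j := natDegree_le_of_degree_le hVdeg
    have han : S.coeff (k + 2) ≠ 0 := by
      rw [← hSdeg]
      exact mt leadingCoeff_eq_zero.mp hS0
    set S'' := Polynomial.derivative (Polynomial.derivative S) with hS''def
    have hS''coeff : ∀ i : ℕ, S''.coeff i = S.coeff (i + 2) * ((i : ℂ) + 2) * ((i : ℂ) + 1) := by
      intro i
      rw [hS''def, coeff_derivative, coeff_derivative]
      push_cast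
      ring
    have hS''0 : S'' ≠ 0 := by
      intro h
      have h0 : S.coeff (k + 2) * ((k : ℂ) + 2) * ((k : ℂ) + 1) = 0 := by
        rw [← hS''coeff, h, coeff_zero]
      exact absurd h0 (mul_ne_zero (mul_ne_zero han hk2) hk1)
    have hV0 : V ≠ 0 := by
      rintro rfl
      rw [zero_mul, add_zero] at heq
      exact hS''0 ((mul_eq_zero.mp heq).resolve_left (pow_ne_zero _ X_ne_zero))
    have heq2 : (X : Polynomial ℂ) ^ (j + 2) * S'' = -(V * S) :=
      eq_neg_of_add_eq_zero_left heq
    -- trailing degree analysis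
    have htd : (j + 2) + S''.natTrailingDegree = V.natTrailingDegree + S.natTrailingDegree := by
      have h1 : ((X : Polynomial ℂ) ^ (j + 2) * S'').natTrailingDegree
          = (j + 2) + S''.natTrailingDegree := by
        rw [natTrailingDegree_mul (pow_ne_zero _ X_ne_zero) hS''0, natTrailingDegree_X_pow]
      have h2 : (-(V * S)).natTrailingDegree = V.natTrailingDegree + S.natTrailingDegree := by
        rw [natTrailingDegree_neg, natTrailingDegree_mul hV0 hS0]
      rw [← h1, heq2, h2]
    have hS''low : S.natTrailingDegree - 2 ≤ S''.natTrailingDegree := by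
      apply le_natTrailingDegree hS''0
      intro i hi
      rw [hS''coeff, coeff_eq_zero_of_lt_natTrailingDegree (by omega), zero_mul, zero_mul]
    have hVp : V.natTrailingDegree = j := by
      have := V.natTrailingDegree_le_natDegree
      omega
    -- V is a monomial
    set v := V.coeff j with hvdef
    have hVmon : V = C v * X ^ j := by
      ext i
      rcases lt_trichotomy i j with h | rfl | h
      · rw [coeff_eq_zero_of_lt_natTrailingDegree (by omega)]
        simp [coeff_X_pow, h.ne]
      · simp [coeff_X_pow, hvdef]
      · rw [coeff_eq_zero_of_natDegree_lt (lt_of_le_of_lt hVnat h)]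
        simp [coeff_X_pow, h.ne']
    -- factor out X^j
    have hfac : (X : Polynomial ℂ) ^ 2 * S'' + C v * S = 0 := by
      have h2 : (X : Polynomial ℂ) ^ j * (X ^ 2 * S'' + C v * S)
          = X ^ (j + 2) * S'' + V * S := by rw [hVmon]; ring
      rw [heq] at h2
      exact (mul_eq_zero.mp h2).resolve_left (pow_ne_zero _ X_ne_zero)
    have key : ∀ i : ℕ, S.coeff (i + 2) * (((i : ℂ) + 2) * ((i : ℂ) + 1) + v) = 0 := by
      intro i
      have := congrArg (fun p => Polynomial.coeff p (i + 2)) hfac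
      simp only [coeff_add, coeff_zero, coeff_C_mul] at this
      rw [coeff_X_pow_mul, hS''coeff] at this
      linear_combination this
    have keylow : ∀ i : ℕ, i < 2 → v * S.coeff i = 0 := by
      intro i hi
      have := congrArg (fun p => Polynomial.coeff p i) hfac
      simp only [coeff_add, coeff_zero, coeff_C_mul] at this
      rw [coeff_X_pow_mul'] at this
      rw [if_neg (by omega)] at this
      linear_combination this
    have hv : v = -(((k : ℂ) + 2) * ((k : ℂ) + 1)) := by
      have := key k
      rcases mul_eq_zero.mp this with h | h
      · exact absurd h han
      · linear_combination h
    have hvne : v ≠ 0 := by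
      rw [hv, neg_ne_zero]
      exact mul_ne_zero hk2 hk1
    have hScoeff : ∀ i : ℕ, i ≠ k + 2 → S.coeff i = 0 := by
      intro i hi
      match i, hi with
      | 0, _ => exact (mul_eq_zero.mp (keylow 0 (by omega))).resolve_left hvne
      | 1, _ => exact (mul_eq_zero.mp (keylow 1 (by omega))).resolve_left hvne
      | (i' + 2), hi =>
        have hik : i' ≠ k := by omega
        have hfact : (((i' : ℂ) + 2) * ((i' : ℂ) + 1) + v) ≠ 0 := by
          rw [hv]
          have h1 : ((i' : ℂ) - (k : ℂ)) ≠ 0 := by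
            rw [sub_ne_zero]
            exact_mod_cast hik
          have h2 : ((i' : ℂ) + (k : ℂ) + 3) ≠ 0 := by
            have h := Nat.cast_ne_zero (R := ℂ) (n := i' + k + 3) |>.mpr (by omega)
            push_cast at h
            convert h using 2
          have heq3 : ((i' : ℂ) + 2) * ((i' : ℂ) + 1) + -(((k : ℂ) + 2) * ((k : ℂ) + 1))
              = ((i' : ℂ) - (k : ℂ)) * ((i' : ℂ) + (k : ℂ) + 3) := by ring
          rw [heq3]
          exact mul_ne_zero h1 h2
        exact (mul_eq_zero.mp (key i')).resolve_right hfact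
    constructor
    · rw [hVmon, hv, show -(((k : ℂ) + 2) * ((k : ℂ) + 1))
        = -((((k : ℕ) + 2 : ℕ) : ℂ) * ((((k : ℕ) + 2 : ℕ) : ℂ) - 1)) by push_cast; ring,
        map_neg]
    · refine ⟨S.coeff (k + 2), han, ?_⟩
      ext i
      rcases eq_or_ne i (k + 2) with rfl | h
      · simp [coeff_X_pow]
      · rw [hScoeff i h]
        simp [coeff_X_pow, h]
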